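/- Let E be a complex inner product space, ψ, ψ' unit vectors in E with φ := ⟪ψ, ψ'⟫ ≠ 0, and let θ, θ' be real numbers. Set ψ̃ := exp(iθ) • ψ, ψ̃' := exp(iθ') • ψ', and φ̃ := ⟪ψ̃, ψ̃'⟫. Then for every α ∈ [0,1]: (i) |φ̃| = |φ|, (ii) the path built from the phase-rotated states satisfies Ψ̃(α) := Ñ(α)⁻¹ • ((1-α) • ψ̃ + (α * conj φ̃) • ψ̃') = exp(iθ) • Ψ(α), and (iii) the rank-one operator is gauge invariant: ⟪Ψ̃(α), x⟫ • Ψ̃(α) = ⟪Ψ(α), x⟫ • Ψ(α) for all x ∈ E. -/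

import Mathlib

open scoped InnerProductSpace ComplexConjugate

/-- Gauge invariance of the adiabatic path: rotating the two states by `U(1)` phases
`exp(iθ)`, `exp(iθ')` leaves the overlap modulus unchanged, rotates the path state by
the overall phase `exp(iθ)`, and leaves the rank-one projector `|Ψ(α)⟩⟨Ψ(α)|` invariant. -/
theorem path_state_gauge_invariance {E : Type*} [NormedAddCommGroup E]
    [InnerProductSpace ℂ E] (ψ ψ' : E) (hψ : ‖ψ‖ = 1) (hψ' : ‖ψ'‖ = 1)
    (hφ : ⟪ψ, ψ'⟫_ℂ ≠ 0) (θ θ' : ℝ)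
    (ψt ψt' : E)
    (hψt : ψt = Complex.exp ((θ : ℂ) * Complex.I) • ψ)
    (hψt' : ψt' = Complex.exp ((θ' : ℂ) * Complex.I) • ψ')
    (Ψ Ψt : ℝ → E)
    (hΨ : ∀ α : ℝ, Ψ α =
      (Real.sqrt ((1 - α) ^ 2 + α * (2 - α) * ‖⟪ψ, ψ'⟫_ℂ‖ ^ 2))⁻¹ •
        (((1 - α : ℝ) : ℂ) • ψ + ((α : ℂ) * conj ⟪ψ, ψ'⟫_ℂ) • ψ'))
    (hΨt : ∀ α : ℝ, Ψt α =
      (Real.sqrt ((1 - α) ^ 2 + α * (2 - α) * ‖⟪ψt, ψt'⟫_ℂ‖ ^ 2))⁻¹ •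
        (((1 - α : ℝ) : ℂ) • ψt + ((α : ℂ) * conj ⟪ψt, ψt'⟫_ℂ) • ψt')) :
    ‖⟪ψt, ψt'⟫_ℂ‖ = ‖⟪ψ, ψ'⟫_ℂ‖ ∧
    ∀ α ∈ Set.Icc (0 : ℝ) 1,
      Ψt α = Complex.exp ((θ : ℂ) * Complex.I) • Ψ α ∧
      ∀ x : E, ⟪Ψt α, x⟫_ℂ • Ψt α = ⟪Ψ α, x⟫_ℂ • Ψ α := by

  have hconj : ∀ t : ℝ, conj (Complex.exp ((t:ℂ) * Complex.I)) * Complex.exp ((t:ℂ) * Complex.I) = 1 := by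
    intro t
    rw [← Complex.normSq_eq_conj_mul_self, Complex.normSq_eq_norm_sq, Complex.norm_exp]
    norm_num
  have hφt : ⟪ψt, ψt'⟫_ℂ =
      conj (Complex.exp ((θ:ℂ) * Complex.I)) * Complex.exp ((θ':ℂ) * Complex.I) * ⟪ψ, ψ'⟫_ℂ := by
    simp only [hψt, hψt', inner_smul_left, inner_smul_right]
    ring
  have habs : ‖⟪ψt, ψt'⟫_ℂ‖ = ‖⟪ψ, ψ'⟫_ℂ‖ := by
    simp [hφt, map_mul, Complex.norm_exp, Complex.norm_conj]
  refine ⟨habs, fun α hα => ?_⟩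
  have hpath : Ψt α = Complex.exp ((θ:ℂ) * Complex.I) • Ψ α := by
    rw [hΨt, hΨ, habs]
    rw [smul_comm]
    congr 1
    rw [hψt, hψt']
    simp only [inner_smul_left, inner_smul_right, map_mul, Complex.conj_conj, smul_smul, smul_add]
    congr 1
    · congr 1; ring
    · congr 1
      linear_combination ((α:ℂ) * Complex.exp ((θ:ℂ) * Complex.I) * conj ⟪ψ, ψ'⟫_ℂ) * hconj θ'
  refine ⟨hpath, fun x => ?_⟩
  rw [hpath, inner_smul_left, smul_smul]
  congr 1
  linear_combination ⟪Ψ α, x⟫_ℂ * hconj θ
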